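/- Let A_n, B_n be subgroups of finite groups C_n (n ∈ ℕ) with C_n = ⟨A_n, B_n⟩ for every n. Suppose X is a frame subgroup of ∏_{n=1}^∞ A_n and Y is a frame subgroup of ∏_{n=1}^∞ B_n; regard X and Y as subgroups of ∏_{n=1}^∞ C_n via the coordinatewise inclusions. Then the subgroup Z = ⟨X, Y⟩ of ∏_{n=1}^∞ C_n is a frame for ∏_{n=1}^∞ C_n. -/

import Mathlib

/-- A subgroup `G` of a Cartesian product `∏ i, S i` of finite groups is a *frame* if it is
finitely generated, contains the restricted direct sum (all elements with finite support),
and every finite-index subgroup of `G` contains a principal congruence subgroup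
`G ∩ ker(∏ i, S i → ∏ i ∈ V, S i)` for some finite set `V` of indices. -/
def IsFrame {ι : Type*} {S : ι → Type*} [∀ i, Group (S i)]
    (G : Subgroup (∀ i, S i)) : Prop :=
  G.FG ∧
  (∀ x : ∀ i, S i, {i | x i ≠ 1}.Finite → x ∈ G) ∧
  (∀ H : Subgroup G, H.FiniteIndex →
    ∃ V : Finset ι, ∀ g : G, (∀ i ∈ V, (g : ∀ i, S i) i = 1) → g ∈ H)

/-- The coordinatewise inclusion `∏ n, A n →* ∏ n, C n` of a Cartesian product of subgroups
`A n ≤ C n` into the Cartesian product of the ambient groups. -/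
def coordInclusion {C : ℕ → Type*} [∀ n, Group (C n)] (A : ∀ n, Subgroup (C n)) :
    (∀ n, A n) →* ∀ n, C n :=
  Pi.monoidHom fun n => (A n).subtype.comp (Pi.evalMonoidHom (fun n => A n) n)

lemma coordInclusion_apply {C : ℕ → Type*} [∀ n, Group (C n)] (A : ∀ n, Subgroup (C n))
    (x : ∀ n, A n) (i : ℕ) : coordInclusion A x i = ↑(x i) := rfl

/-- **Lemma (Kassabov–Nikolov).**  Let `A n, B n ≤ C n` be finite groups with
`C n = ⟨A n, B n⟩` for all `n`.  If `X` is a frame subgroup of `∏ n, A n` and `Y` is a frame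
subgroup of `∏ n, B n`, both regarded as subgroups of `∏ n, C n` via the coordinatewise
inclusions, then `Z = ⟨X, Y⟩` is a frame for `∏ n, C n`. -/
theorem join_of_frames_is_frame
    (C : ℕ → Type) [∀ n, Group (C n)] [∀ n, Finite (C n)]
    (A B : ∀ n, Subgroup (C n)) (hgen : ∀ n, A n ⊔ B n = ⊤)
    (X : Subgroup (∀ n, A n)) (Y : Subgroup (∀ n, B n))
    (hX : IsFrame X) (hY : IsFrame Y) :
    IsFrame (X.map (coordInclusion A) ⊔ Y.map (coordInclusion B)) := by
  classical
  set Z : Subgroup (∀ n, C n) := X.map (coordInclusion A) ⊔ Y.map (coordInclusion B) with hZdef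
  -- single elements of the `A`-side lie in `Z`
  have hsingleA : ∀ (n : ℕ) (a : C n), a ∈ A n → Pi.mulSingle n a ∈ Z := by
    intro n a ha
    refine Subgroup.mem_sup_left (Subgroup.mem_map.mpr
      ⟨Pi.mulSingle n (⟨a, ha⟩ : A n), hX.2.1 _ ?_, ?_⟩)
    · refine (Set.finite_singleton n).subset fun i hi => ?_
      by_contra hne
      exact hi (by simp [Pi.mulSingle_eq_of_ne hne])
    · funext i
      rcases eq_or_ne i n with rfl | hne
      · simp [coordInclusion_apply]
      · simp [coordInclusion_apply, Pi.mulSingle_eq_of_ne hne]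
  have hsingleB : ∀ (n : ℕ) (b : C n), b ∈ B n → Pi.mulSingle n b ∈ Z := by
    intro n b hb
    refine Subgroup.mem_sup_right (Subgroup.mem_map.mpr
      ⟨Pi.mulSingle n (⟨b, hb⟩ : B n), hY.2.1 _ ?_, ?_⟩)
    · refine (Set.finite_singleton n).subset fun i hi => ?_
      by_contra hne
      exact hi (by simp [Pi.mulSingle_eq_of_ne hne])
    · funext i
      rcases eq_or_ne i n with rfl | hne
      · simp [coordInclusion_apply]
      · simp [coordInclusion_apply, Pi.mulSingle_eq_of_ne hne]
  have hsingle : ∀ (n : ℕ) (c : C n), Pi.mulSingle n c ∈ Z := by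
    intro n c
    have hc : c ∈ Subgroup.closure ((A n : Set (C n)) ∪ (B n : Set (C n))) := by
      rw [Subgroup.closure_union, Subgroup.closure_eq, Subgroup.closure_eq, hgen n]
      trivial
    induction hc using Subgroup.closure_induction with
    | mem x hx =>
      rcases hx with hx | hx
      · exact hsingleA n x hx
      · exact hsingleB n x hx
    | one => simpa using one_mem Z
    | mul x y hx hy ihx ihy =>
      have : Pi.mulSingle n (x * y) = Pi.mulSingle n x * Pi.mulSingle n y := by
        simp [Pi.mulSingle_mul]
      rw [this]; exact mul_mem ihx ihy
    | inv x hx ihx =>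
      have : Pi.mulSingle n x⁻¹ = (Pi.mulSingle n x)⁻¹ := by
        simp [Pi.mulSingle_inv]
      rw [this]; exact inv_mem ihx
  -- finitely supported elements lie in `Z`
  have hfinsupp : ∀ (s : Finset ℕ) (x : ∀ i, C i), (∀ i, x i ≠ 1 → i ∈ s) → x ∈ Z := by
    intro s
    induction s using Finset.induction_on with
    | empty =>
      intro x hx
      have : x = 1 := by
        funext i
        by_contra h
        exact absurd (hx i h) (Finset.notMem_empty i)
      rw [this]; exact one_mem Z
    | @insert a s ha ih =>
      intro x hx
      have hupd : Function.update x a 1 ∈ Z := by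
        refine ih _ fun i hi => ?_
        rcases eq_or_ne i a with rfl | hne
        · simp at hi
        · rw [Function.update_of_ne hne] at hi
          have := hx i hi
          simp only [Finset.mem_insert] at this
          exact this.resolve_left hne
      have hxeq : x = Pi.mulSingle a (x a) * Function.update x a 1 := by
        funext i
        rcases eq_or_ne i a with rfl | hne
        · simp
        · simp [Pi.mulSingle_eq_of_ne hne, Function.update_of_ne hne]
      rw [hxeq]
      exact mul_mem (hsingle a (x a)) hupd
  refine ⟨?_, ?_, ?_⟩
  · -- finitely generated
    obtain ⟨SX, hSX⟩ := hX.1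
    obtain ⟨SY, hSY⟩ := hY.1
    rw [Subgroup.fg_iff]
    refine ⟨(coordInclusion A) '' ↑SX ∪ (coordInclusion B) '' ↑SY, ?_, ?_⟩
    · rw [Subgroup.closure_union, ← MonoidHom.map_closure, ← MonoidHom.map_closure, hSX, hSY]
    · exact ((SX.finite_toSet.image _).union (SY.finite_toSet.image _))
  · -- restricted direct sum
    intro x hfin
    exact hfinsupp hfin.toFinset x fun i hi => hfin.mem_toFinset.mpr hi
  · -- congruence subgroup property
    intro H hH
    haveI := hH
    set N : Subgroup Z := H.normalCore with hNdef
    haveI : N.FiniteIndex := Subgroup.finiteIndex_normalCore H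
    haveI : Finite (Z ⧸ N) := Subgroup.finite_quotient_of_finiteIndex
    -- the two inclusion maps into Z
    let fX : X →* Z :=
      (Subgroup.inclusion (le_sup_left : X.map (coordInclusion A) ≤ Z)).comp
        ((coordInclusion A).subgroupMap X)
    let fY : Y →* Z :=
      (Subgroup.inclusion (le_sup_right : Y.map (coordInclusion B) ≤ Z)).comp
        ((coordInclusion B).subgroupMap Y)
    have hcomapX : (N.comap fX).FiniteIndex := by
      have : N.comap fX = ((QuotientGroup.mk' N).comp fX).ker := by
        rw [← MonoidHom.comap_ker, QuotientGroup.ker_mk']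
      rw [this]
      infer_instance
    have hcomapY : (N.comap fY).FiniteIndex := by
      have : N.comap fY = ((QuotientGroup.mk' N).comp fY).ker := by
        rw [← MonoidHom.comap_ker, QuotientGroup.ker_mk']
      rw [this]
      infer_instance
    obtain ⟨VX, hVX⟩ := hX.2.2 (N.comap fX) hcomapX
    obtain ⟨VY, hVY⟩ := hY.2.2 (N.comap fY) hcomapY
    refine ⟨VX ∪ VY, ?_⟩
    set V : Finset ℕ := VX ∪ VY with hVdef
    -- the truncation homomorphism killing coordinates in V
    let ρ : (∀ i, C i) →* (∀ i, C i) :=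
      { toFun := fun x i => if i ∈ V then 1 else x i
        map_one' := by funext i; simp
        map_mul' := by
          intro x y
          funext i
          by_cases hi : i ∈ V <;> simp [hi] }
    have hρ_apply : ∀ (x : ∀ i, C i) (i : ℕ), ρ x i = if i ∈ V then 1 else x i :=
      fun x i => rfl
    -- all of Z is sent into N by ρ
    have hXT : X.map (coordInclusion A) ≤ (N.map Z.subtype).comap ρ := by
      rintro _ ⟨x₀, hx₀, rfl⟩
      set d : ∀ i, A i := fun i => if i ∈ V then x₀ i else 1 with hddef
      have hd : d ∈ X := by
        refine hX.2.1 d (V.finite_toSet.subset fun i hi => ?_)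
        by_contra hiV
        apply hi
        show (if i ∈ V then x₀ i else 1) = 1
        rw [if_neg fun h => hiV (Finset.mem_coe.mpr h)]
      have hx' : x₀ * d⁻¹ ∈ X := X.mul_mem hx₀ (X.inv_mem hd)
      have hVtriv : ∀ i ∈ VX, ((⟨x₀ * d⁻¹, hx'⟩ : X) : ∀ i, A i) i = 1 := by
        intro i hi
        have hiV : i ∈ V := Finset.mem_union_left _ hi
        show x₀ i * (d i)⁻¹ = 1
        simp [hddef, hiV]
      have hmem : (⟨x₀ * d⁻¹, hx'⟩ : X) ∈ N.comap fX := hVX _ hVtriv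
      refine Subgroup.mem_comap.mpr (Subgroup.mem_map.mpr
        ⟨fX ⟨x₀ * d⁻¹, hx'⟩, hmem, ?_⟩)
      funext i
      show (↑((x₀ * d⁻¹) i) : C i) = if i ∈ V then 1 else (coordInclusion A x₀) i
      by_cases hi : i ∈ V
      · simp [hddef, hi]
      · simp [coordInclusion_apply, hddef, hi]
    have hYT : Y.map (coordInclusion B) ≤ (N.map Z.subtype).comap ρ := by
      rintro _ ⟨x₀, hx₀, rfl⟩
      set d : ∀ i, B i := fun i => if i ∈ V then x₀ i else 1 with hddef
      have hd : d ∈ Y := by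
        refine hY.2.1 d (V.finite_toSet.subset fun i hi => ?_)
        by_contra hiV
        apply hi
        show (if i ∈ V then x₀ i else 1) = 1
        rw [if_neg fun h => hiV (Finset.mem_coe.mpr h)]
      have hx' : x₀ * d⁻¹ ∈ Y := Y.mul_mem hx₀ (Y.inv_mem hd)
      have hVtriv : ∀ i ∈ VY, ((⟨x₀ * d⁻¹, hx'⟩ : Y) : ∀ i, B i) i = 1 := by
        intro i hi
        have hiV : i ∈ V := Finset.mem_union_right _ hi
        show x₀ i * (d i)⁻¹ = 1
        simp [hddef, hiV]
      have hmem : (⟨x₀ * d⁻¹, hx'⟩ : Y) ∈ N.comap fY := hVY _ hVtriv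
      refine Subgroup.mem_comap.mpr (Subgroup.mem_map.mpr
        ⟨fY ⟨x₀ * d⁻¹, hx'⟩, hmem, ?_⟩)
      funext i
      show (↑((x₀ * d⁻¹) i) : C i) = if i ∈ V then 1 else (coordInclusion B x₀) i
      by_cases hi : i ∈ V
      · simp [hddef, hi]
      · simp [coordInclusion_apply, hddef, hi]
    have hZT : Z ≤ (N.map Z.subtype).comap ρ := sup_le hXT hYT
    intro g hg
    have hfix : ρ (↑g : ∀ i, C i) = ↑g := by
      funext i
      rw [hρ_apply]
      by_cases hi : i ∈ V
      · rw [if_pos hi, hg i hi]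
      · rw [if_neg hi]
    have hgN : (↑g : ∀ i, C i) ∈ N.map Z.subtype := by
      have := hZT g.2
      rwa [Subgroup.mem_comap, hfix] at this
    obtain ⟨n, hn, hn2⟩ := Subgroup.mem_map.mp hgN
    have : n = g := Subtype.ext hn2
    subst this
    exact H.normalCore_le hn
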